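/- arXiv:2603.01320 — 2 statements merged into one kernel-verified Lean document; each statement's English description precedes it below -/
import Mathlib

section
/- Let A be a real Banach algebra with unit and let X, Y ∈ A. Then there exist constants C ≥ 0 and δ > 0 such that for all real ε with |ε| ≤ δ, ‖exp(εY) * exp(εX) − exp(ε(X + Y) + (ε²/2)·⁅Y, X⁆ + (ε³/12)·(⁅Y, ⁅Y, X⁆⁆ + ⁅X, ⁅X, Y⁆⁆))‖ ≤ C·ε⁴. (This is the third-order Baker–Campbell–Hausdorff expansion of Section 9.4.) -/
open NormedSpace
open scoped Nat

set_option maxHeartbeats 1000000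

section Aux

variable {A : Type*} [NormedRing A] [NormedAlgebra ℝ A] [CompleteSpace A]

/-- Third-order Taylor polynomial of the exponential. -/
noncomputable def T3 (w : A) : A :=
  1 + w + (2⁻¹ : ℝ) • (w * w) + (6⁻¹ : ℝ) • (w * (w * w))

lemma T3_partial_sum (w : A) :
    (∑ i ∈ Finset.range 4, (i !⁻¹ : ℝ) • w ^ i) = T3 w := by
  simp [Finset.sum_range_succ, T3, Nat.factorial, pow_succ, mul_assoc]

lemma norm_exp_sub_T3 (w : A) :
    ‖exp w - T3 w‖ ≤ ‖w‖ ^ 4 * Real.exp ‖w‖ := by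
  have hsum : Summable fun n : ℕ => (n !⁻¹ : ℝ) • w ^ n :=
    expSeries_summable' (𝕂 := ℝ) w
  have htail : exp w - T3 w = ∑' n : ℕ, ((n + 4)!⁻¹ : ℝ) • w ^ (n + 4) := by
    have h := Summable.sum_add_tsum_nat_add 4 hsum
    have hexp : exp w = ∑' n : ℕ, (n !⁻¹ : ℝ) • w ^ n := by rw [exp_eq_tsum ℝ]
    rw [hexp, ← h, T3_partial_sum]
    abel
  have hsn : Summable fun n : ℕ => ‖((n + 4)!⁻¹ : ℝ) • w ^ (n + 4)‖ :=
    (summable_nat_add_iff 4).mpr (norm_expSeries_summable' (𝕂 := ℝ) w)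
  have hmaj : Summable fun n : ℕ => ‖w‖ ^ 4 * ((n !⁻¹ : ℝ) * ‖w‖ ^ n) := by
    apply Summable.mul_left
    simpa [div_eq_mul_inv, mul_comm] using Real.summable_pow_div_factorial ‖w‖
  rw [htail]
  calc ‖∑' n : ℕ, ((n + 4)!⁻¹ : ℝ) • w ^ (n + 4)‖
      ≤ ∑' n : ℕ, ‖((n + 4)!⁻¹ : ℝ) • w ^ (n + 4)‖ := norm_tsum_le_tsum_norm hsn
    _ ≤ ∑' n : ℕ, ‖w‖ ^ 4 * ((n !⁻¹ : ℝ) * ‖w‖ ^ n) := by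
        refine Summable.tsum_le_tsum (fun n => ?_) hsn hmaj
        rw [norm_smul, Real.norm_eq_abs, abs_of_nonneg (by positivity)]
        have h1 : ((n + 4)!⁻¹ : ℝ) ≤ (n !⁻¹ : ℝ) := by
          apply inv_anti₀ (by positivity)
          exact_mod_cast Nat.factorial_le (by omega)
        have h2 : ‖w ^ (n + 4)‖ ≤ ‖w‖ ^ n * ‖w‖ ^ 4 := by
          rw [← pow_add]; exact norm_pow_le' w (by omega)
        calc ((n + 4)!⁻¹ : ℝ) * ‖w ^ (n + 4)‖
            ≤ (n !⁻¹ : ℝ) * (‖w‖ ^ n * ‖w‖ ^ 4) :=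
              mul_le_mul h1 h2 (norm_nonneg _) (by positivity)
          _ = ‖w‖ ^ 4 * ((n !⁻¹ : ℝ) * ‖w‖ ^ n) := by ring
    _ = ‖w‖ ^ 4 * Real.exp ‖w‖ := by
        rw [tsum_mul_left]
        congr 1
        rw [Real.exp_eq_exp_ℝ, exp_eq_tsum ℝ]
        simp [smul_eq_mul]

lemma decomp_abstract {A' : Type*} [Ring A'] (a b c d e f g : A')
    (h : c * d - f = g) : a * b - e = (a - c) * b + c * (b - d) + g + (f - e) := by
  rw [← h]; noncomm_ring

lemma rem_bound (w : A) (ε b : ℝ) (hε : |ε| ≤ 1) (hb : 0 ≤ b)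
    (hw : ‖w‖ ≤ |ε| * b) :
    ‖exp w - T3 w‖ ≤ ε ^ 4 * (b ^ 4 * Real.exp b) := by
  have habs : |ε| ^ 4 = ε ^ 4 := by
    rw [← abs_pow]; exact abs_of_nonneg (by positivity)
  have h1 : ‖w‖ ≤ b := hw.trans (by nlinarith [abs_nonneg ε])
  calc ‖exp w - T3 w‖ ≤ ‖w‖ ^ 4 * Real.exp ‖w‖ := norm_exp_sub_T3 w
    _ ≤ (|ε| * b) ^ 4 * Real.exp b := by
        apply mul_le_mul (pow_le_pow_left₀ (norm_nonneg _) hw 4)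
          (Real.exp_le_exp.2 h1) (Real.exp_pos _).le (by positivity)
    _ = ε ^ 4 * (b ^ 4 * Real.exp b) := by rw [mul_pow, habs]; ring

end Aux

/-- Third-order Baker–Campbell–Hausdorff expansion (Section 9.4). -/
theorem bch_third_order (A : Type*) [NormedRing A] [NormedAlgebra ℝ A]
    [CompleteSpace A] (X Y : A) :
    ∃ (C δ : ℝ), 0 ≤ C ∧ 0 < δ ∧ ∀ ε : ℝ, |ε| ≤ δ →
      ‖exp (ε • Y) * exp (ε • X) -
        exp (ε • (X + Y) + (ε ^ 2 / 2) • ⁅Y, X⁆ +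
          (ε ^ 3 / 12) • (⁅Y, ⁅Y, X⁆⁆ + ⁅X, ⁅X, Y⁆⁆))‖ ≤ C * ε ^ 4 := by
  -- abbreviations
  set P : A := X + Y with hP
  set Q : A := Y * X - X * Y with hQ
  set R : A := Y * (Y * X - X * Y) - (Y * X - X * Y) * Y +
      (X * (X * Y - Y * X) - (X * Y - Y * X) * X) with hR
  have hlie : ∀ ε : ℝ, ε • (X + Y) + (ε ^ 2 / 2) • ⁅Y, X⁆ +
      (ε ^ 3 / 12) • (⁅Y, ⁅Y, X⁆⁆ + ⁅X, ⁅X, Y⁆⁆)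
      = ε • P + (ε ^ 2 / 2) • Q + (ε ^ 3 / 12) • R := by
    intro ε
    simp only [Ring.lie_def, hP, hQ, hR]
  -- the polynomial functions appearing in the ε⁴ coefficient
  set W₁ : ℝ → A := fun ε => P + (ε / 2) • Q + (ε ^ 2 / 12) • R with hW₁
  set W₂ : ℝ → A := fun ε => P + (ε / 2) • Q with hW₂
  set W₃ : ℝ → A := fun ε => (2⁻¹ : ℝ) • Q + (ε / 12) • R with hW₃
  set E : ℝ → A := fun ε =>
      (6⁻¹ : ℝ) • (Y * (X * (X * X))) + (4⁻¹ : ℝ) • (Y * (Y * (X * X))) +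
      (6⁻¹ : ℝ) • (Y * (Y * (Y * X))) +
      (ε / 12) • (Y * (Y * (X * (X * X)))) +
      (ε / 12) • (Y * (Y * (Y * (X * X)))) +
      (ε ^ 2 / 36) • (Y * (Y * (Y * (X * (X * X))))) with hE
  set F : ℝ → A := fun ε =>
      E ε - (24⁻¹ : ℝ) • (R * W₁ ε + W₂ ε * R) -
      (6⁻¹ : ℝ) • (W₃ ε * (W₁ ε * W₁ ε) + P * (W₃ ε * W₁ ε) + P * (P * W₃ ε)) -
      (8⁻¹ : ℝ) • (Q * Q) with hF
  -- the G polynomial (common third-order part)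
  set G : ℝ → A := fun ε =>
      1 + ε • P + (ε ^ 2 / 2) • Q + (ε ^ 2 / 2) • (P * P) + (ε ^ 3 / 12) • R +
      (ε ^ 3 / 4) • (P * Q) + (ε ^ 3 / 4) • (Q * P) + (ε ^ 3 / 6) • (P * (P * P))
      with hG
  -- key algebraic identity no. 1
  have I1 : ∀ ε : ℝ, T3 (ε • Y) * T3 (ε • X) = G ε + ε ^ 4 • E ε := by
    intro ε
    simp only [hG, hE, hP, hQ, hR, T3]
    simp only [mul_add, add_mul, sub_mul, mul_sub, smul_mul_assoc, mul_smul_comm,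
      smul_smul, smul_add, smul_sub, mul_one, one_mul, mul_assoc]
    module
  -- key algebraic identity no. 2
  have I5 : ∀ ε : ℝ, T3 (ε • P + (ε ^ 2 / 2) • Q + (ε ^ 3 / 12) • R)
      = G ε + ε ^ 4 • ((24⁻¹ : ℝ) • (R * W₁ ε + W₂ ε * R) +
        (6⁻¹ : ℝ) • (W₃ ε * (W₁ ε * W₁ ε) + P * (W₃ ε * W₁ ε) + P * (P * W₃ ε)) +
        (8⁻¹ : ℝ) • (Q * Q)) := by
    intro ε
    simp only [hG, hW₁, hW₂, hW₃, T3]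
    simp only [mul_add, add_mul, sub_mul, mul_sub, smul_mul_assoc, mul_smul_comm,
      smul_smul, smul_add, smul_sub, mul_one, one_mul, mul_assoc]
    module
  have key : ∀ ε : ℝ, T3 (ε • Y) * T3 (ε • X)
      - T3 (ε • P + (ε ^ 2 / 2) • Q + (ε ^ 3 / 12) • R) = ε ^ 4 • F ε := by
    intro ε
    rw [I1, I5, hF]
    simp only [smul_sub, smul_add]
    abel
  -- norm of the argument of exp
  set M : ℝ := ‖P‖ + ‖Q‖ + ‖R‖ with hM
  have hM0 : 0 ≤ M := by positivity
  have hZnorm : ∀ ε : ℝ, |ε| ≤ 1 →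
      ‖ε • P + (ε ^ 2 / 2) • Q + (ε ^ 3 / 12) • R‖ ≤ |ε| * M := by
    intro ε hε
    have h1 : ‖ε • P + (ε ^ 2 / 2) • Q + (ε ^ 3 / 12) • R‖
        ≤ ‖ε • P‖ + ‖(ε ^ 2 / 2) • Q‖ + ‖(ε ^ 3 / 12) • R‖ := norm_add₃_le
    rw [norm_smul, norm_smul, norm_smul, Real.norm_eq_abs, Real.norm_eq_abs,
      Real.norm_eq_abs] at h1
    have e2 : |ε ^ 2 / 2| = |ε| ^ 2 / 2 := by
      rw [abs_div, abs_pow]; norm_num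
    have e3 : |ε ^ 3 / 12| = |ε| ^ 3 / 12 := by
      rw [abs_div, abs_pow]; norm_num
    rw [e2, e3] at h1
    have h0 : 0 ≤ |ε| := abs_nonneg ε
    refine h1.trans ?_
    rw [hM]
    have hq : |ε| ^ 2 / 2 ≤ |ε| := by nlinarith
    have hr : |ε| ^ 3 / 12 ≤ |ε| := by nlinarith [sq_nonneg |ε|]
    nlinarith [mul_le_mul_of_nonneg_right hq (norm_nonneg Q),
      mul_le_mul_of_nonneg_right hr (norm_nonneg R)]
  -- compactness bounds
  obtain ⟨K₁, hK₁⟩ : ∃ K₁, ∀ t ∈ Set.Icc (-1 : ℝ) 1, ‖exp (t • X)‖ ≤ K₁ :=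
    isCompact_Icc.exists_bound_of_continuousOn
      (Continuous.continuousOn
        ((continuous_iff_continuousAt.2 fun x => (exp_analytic (𝕂 := ℝ) x).continuousAt).comp (continuous_id.smul continuous_const)))
  obtain ⟨K₂, hK₂⟩ : ∃ K₂, ∀ t ∈ Set.Icc (-1 : ℝ) 1, ‖T3 (t • Y)‖ ≤ K₂ :=
    isCompact_Icc.exists_bound_of_continuousOn
      (Continuous.continuousOn (by unfold T3; fun_prop))
  obtain ⟨K₃, hK₃⟩ : ∃ K₃, ∀ t ∈ Set.Icc (-1 : ℝ) 1, ‖F t‖ ≤ K₃ :=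
    isCompact_Icc.exists_bound_of_continuousOn
      (Continuous.continuousOn (by rw [hF, hE, hW₁, hW₂, hW₃]; fun_prop))
  have hK₁0 : 0 ≤ K₁ := le_trans (norm_nonneg _) (hK₁ 0 (by norm_num))
  have hK₂0 : 0 ≤ K₂ := le_trans (norm_nonneg _) (hK₂ 0 (by norm_num))
  have hK₃0 : 0 ≤ K₃ := le_trans (norm_nonneg _) (hK₃ 0 (by norm_num))
  -- the constant
  refine ⟨‖Y‖ ^ 4 * Real.exp ‖Y‖ * K₁ + K₂ * (‖X‖ ^ 4 * Real.exp ‖X‖) + K₃ +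
      M ^ 4 * Real.exp M, 1, by positivity, one_pos, ?_⟩
  intro ε hε
  rw [hlie ε]
  have hmem : ε ∈ Set.Icc (-1 : ℝ) 1 := abs_le.mp hε
  set z : A := ε • P + (ε ^ 2 / 2) • Q + (ε ^ 3 / 12) • R with hz
  have decomp : exp (ε • Y) * exp (ε • X) - exp z
      = (exp (ε • Y) - T3 (ε • Y)) * exp (ε • X)
        + T3 (ε • Y) * (exp (ε • X) - T3 (ε • X))
        + ε ^ 4 • F ε + (T3 z - exp z) :=
    decomp_abstract _ _ _ _ _ _ _ (key ε)
  have hremY : ‖exp (ε • Y) - T3 (ε • Y)‖ ≤ ε ^ 4 * (‖Y‖ ^ 4 * Real.exp ‖Y‖) :=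
    rem_bound _ ε ‖Y‖ hε (norm_nonneg Y)
      (by rw [norm_smul, Real.norm_eq_abs])
  have hremX : ‖exp (ε • X) - T3 (ε • X)‖ ≤ ε ^ 4 * (‖X‖ ^ 4 * Real.exp ‖X‖) :=
    rem_bound _ ε ‖X‖ hε (norm_nonneg X)
      (by rw [norm_smul, Real.norm_eq_abs])
  have hremZ : ‖exp z - T3 z‖ ≤ ε ^ 4 * (M ^ 4 * Real.exp M) :=
    rem_bound _ ε M hε hM0 (hZnorm ε hε)
  have habs : |ε| ^ 4 = ε ^ 4 := by
    rw [← abs_pow]; exact abs_of_nonneg (by positivity)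
  have he40 : (0:ℝ) ≤ ε ^ 4 := by positivity
  rw [decomp]
  calc ‖(exp (ε • Y) - T3 (ε • Y)) * exp (ε • X)
        + T3 (ε • Y) * (exp (ε • X) - T3 (ε • X))
        + ε ^ 4 • F ε + (T3 z - exp z)‖
      ≤ ‖(exp (ε • Y) - T3 (ε • Y)) * exp (ε • X)
        + T3 (ε • Y) * (exp (ε • X) - T3 (ε • X))
        + ε ^ 4 • F ε‖ + ‖T3 z - exp z‖ := norm_add_le _ _
    _ ≤ (‖(exp (ε • Y) - T3 (ε • Y)) * exp (ε • X)
        + T3 (ε • Y) * (exp (ε • X) - T3 (ε • X))‖ + ‖ε ^ 4 • F ε‖)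
        + ‖T3 z - exp z‖ := by gcongr; exact norm_add_le _ _
    _ ≤ ((‖(exp (ε • Y) - T3 (ε • Y)) * exp (ε • X)‖
        + ‖T3 (ε • Y) * (exp (ε • X) - T3 (ε • X))‖) + ‖ε ^ 4 • F ε‖)
        + ‖T3 z - exp z‖ := by gcongr; exact norm_add_le _ _
    _ ≤ ((ε ^ 4 * (‖Y‖ ^ 4 * Real.exp ‖Y‖) * K₁
        + K₂ * (ε ^ 4 * (‖X‖ ^ 4 * Real.exp ‖X‖))) + ε ^ 4 * K₃)
        + ε ^ 4 * (M ^ 4 * Real.exp M) := by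
        gcongr ?_ + ?_ + ?_ + ?_
        · exact (norm_mul_le _ _).trans
            (mul_le_mul hremY (hK₁ ε hmem) (norm_nonneg _) (by positivity))
        · exact (norm_mul_le _ _).trans
            (mul_le_mul (hK₂ ε hmem) hremX (norm_nonneg _) hK₂0)
        · rw [norm_smul, Real.norm_eq_abs, abs_pow, habs]
          exact mul_le_mul_of_nonneg_left (hK₃ ε hmem) he40
        · rw [norm_sub_rev]; exact hremZ
    _ = (‖Y‖ ^ 4 * Real.exp ‖Y‖ * K₁ + K₂ * (‖X‖ ^ 4 * Real.exp ‖X‖) + K₃ +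
        M ^ 4 * Real.exp M) * ε ^ 4 := by ring
end

section
/- Let A be a real Banach algebra with unit and let X, Y ∈ A. Then the normalized order-asymmetry converges to the norm of the commutator: (1/ε²)·‖exp(εY) * exp(εX) − exp(εX) * exp(εY)‖ → ‖⁅Y, X⁆‖ as ε → 0 (ε ≠ 0). In particular, for sufficiently small exposures the order asymmetry scales quadratically in the exposure amplitude ε, with coefficient ‖⁅Y, X⁆‖. (This is the paper's experimentally testable quadratic-scaling prediction of Sections 9 and 11.) -/
open NormedSpace Filter Topology Asymptotics Nat

section aux
variable {A : Type*} [NormedRing A] [NormedAlgebra ℝ A] [CompleteSpace A]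

lemma exp_taylor2_bound (a : A) (h : ‖a‖ ≤ 1) :
    ‖exp a - (1 + a + (2:ℝ)⁻¹ • (a * a))‖ ≤ Real.exp 1 * ‖a‖ ^ 3 := by
  have hs : Summable fun n : ℕ => ((n ! : ℝ))⁻¹ • a ^ n := expSeries_summable' a
  have h1 : exp a = (∑ i ∈ Finset.range 3, ((i ! : ℝ))⁻¹ • a ^ i)
      + ∑' n : ℕ, (((n + 3)! : ℝ))⁻¹ • a ^ (n + 3) := by
    rw [exp_eq_tsum ℝ]
    exact (hs.sum_add_tsum_nat_add 3).symm
  have hhead : (∑ i ∈ Finset.range 3, ((i ! : ℝ))⁻¹ • a ^ i) = 1 + a + (2:ℝ)⁻¹ • (a * a) := by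
    norm_num [Finset.sum_range_succ, Nat.factorial, pow_succ]
  have h2 : exp a - (1 + a + (2:ℝ)⁻¹ • (a * a))
      = ∑' n : ℕ, (((n + 3)! : ℝ))⁻¹ • a ^ (n + 3) := by
    rw [h1, hhead, add_sub_cancel_left]
  rw [h2]
  have hsn : Summable fun n : ℕ => ‖(((n + 3)! : ℝ))⁻¹ • a ^ (n + 3)‖ :=
    (summable_nat_add_iff 3).mpr (norm_expSeries_summable' (𝕂 := ℝ) a)
  have hsb : Summable fun n : ℕ => ((n ! : ℝ))⁻¹ * ‖a‖ ^ 3 := by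
    apply Summable.mul_right
    have := Real.summable_pow_div_factorial 1
    simpa [one_div] using this
  refine (norm_tsum_le_tsum_norm hsn).trans ?_
  have hterm : ∀ n : ℕ, ‖(((n + 3)! : ℝ))⁻¹ • a ^ (n + 3)‖ ≤ ((n ! : ℝ))⁻¹ * ‖a‖ ^ 3 := by
    intro n
    rw [norm_smul, norm_inv, Real.norm_natCast]
    have h3 : ‖a ^ (n + 3)‖ ≤ ‖a‖ ^ 3 := by
      refine (norm_pow_le' a (by omega)).trans ?_
      calc ‖a‖ ^ (n + 3) = ‖a‖ ^ n * ‖a‖ ^ 3 := by ring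
        _ ≤ 1 * ‖a‖ ^ 3 :=
            mul_le_mul_of_nonneg_right (pow_le_one₀ (norm_nonneg a) h) (by positivity)
        _ = ‖a‖ ^ 3 := one_mul _
    have h4 : ((( n + 3)! : ℝ))⁻¹ ≤ ((n ! : ℝ))⁻¹ := by
      apply inv_anti₀
      · exact_mod_cast Nat.factorial_pos n
      · exact_mod_cast Nat.factorial_le (by omega)
    exact mul_le_mul h4 h3 (norm_nonneg _) (by positivity)
  refine (Summable.tsum_le_tsum hterm hsn hsb).trans ?_
  rw [tsum_mul_right]
  have : (∑' n : ℕ, ((n ! : ℝ))⁻¹) = Real.exp 1 := by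
    rw [Real.exp_eq_exp_ℝ, exp_eq_tsum ℝ]
    simp
  rw [this]

lemma exp_taylor_isBigO (X : A) :
    (fun ε : ℝ => exp (ε • X) - (1 + ε • X + (ε ^ 2 * (2:ℝ)⁻¹) • (X * X)))
      =O[𝓝 0] fun ε => ε ^ 3 := by
  rw [isBigO_iff]
  refine ⟨Real.exp 1 * ‖X‖ ^ 3, ?_⟩
  have hev : ∀ᶠ ε : ℝ in 𝓝 0, |ε| < (‖X‖ + 1)⁻¹ := by
    simpa using eventually_abs_sub_lt (0:ℝ) (by positivity)
  filter_upwards [hev] with ε hε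
  have hnorm : ‖ε • X‖ ≤ 1 := by
    rw [norm_smul, Real.norm_eq_abs]
    calc |ε| * ‖X‖ ≤ (‖X‖ + 1)⁻¹ * (‖X‖ + 1) := by
          have h1 : (0:ℝ) ≤ (‖X‖ + 1)⁻¹ := by positivity
          have h2 : ‖X‖ ≤ ‖X‖ + 1 := by linarith
          exact mul_le_mul hε.le h2 (norm_nonneg X) h1
      _ = 1 := by
          rw [inv_mul_cancel₀]; positivity
  have key := exp_taylor2_bound (ε • X) hnorm
  have heq : (2:ℝ)⁻¹ • (ε • X * (ε • X)) = (ε ^ 2 * (2:ℝ)⁻¹) • (X * X) := by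
    simp only [smul_mul_assoc, mul_smul_comm, smul_smul]
    ring_nf
  rw [heq] at key
  refine key.trans (le_of_eq ?_)
  rw [norm_smul, Real.norm_eq_abs, mul_pow, norm_pow, Real.norm_eq_abs]
  ring

lemma poly_comm_id (X Y : A) (ε : ℝ) :
    (1 + ε • Y + (ε ^ 2 * (2:ℝ)⁻¹) • (Y * Y)) * (1 + ε • X + (ε ^ 2 * (2:ℝ)⁻¹) • (X * X))
      - (1 + ε • X + (ε ^ 2 * (2:ℝ)⁻¹) • (X * X)) * (1 + ε • Y + (ε ^ 2 * (2:ℝ)⁻¹) • (Y * Y))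
      - (ε ^ 2) • ⁅Y, X⁆
    = (ε ^ 3) • ((2:ℝ)⁻¹ • (Y * (X * X) - X * (X * Y) + Y * (Y * X) - X * (Y * Y))
        + (ε * (4:ℝ)⁻¹) • (Y * (Y * (X * X)) - X * (X * (Y * Y)))) := by
  simp only [Ring.lie_def, mul_add, add_mul, mul_one, one_mul, smul_mul_assoc,
    mul_smul_comm, smul_smul, mul_assoc, smul_add, smul_sub]
  module

lemma core_isBigO (X Y : A) :
    (fun ε : ℝ => exp (ε • Y) * exp (ε • X) - exp (ε • X) * exp (ε • Y)
      - (ε ^ 2) • ⁅Y, X⁆) =O[𝓝 0] fun ε => ε ^ 3 := by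
  set QX : ℝ → A := fun ε => 1 + ε • X + (ε ^ 2 * (2:ℝ)⁻¹) • (X * X) with hQX
  set QY : ℝ → A := fun ε => 1 + ε • Y + (ε ^ 2 * (2:ℝ)⁻¹) • (Y * Y) with hQY
  have hQXc : Continuous QX := by fun_prop
  have hQYc : Continuous QY := by fun_prop
  have hQXO : QX =O[𝓝 (0:ℝ)] (fun _ => (1:ℝ)) := (hQXc.tendsto 0).isBigO_one ℝ
  have hQYO : QY =O[𝓝 (0:ℝ)] (fun _ => (1:ℝ)) := (hQYc.tendsto 0).isBigO_one ℝ
  have hEX : (fun ε : ℝ => exp (ε • X)) =O[𝓝 (0:ℝ)] (fun _ => (1:ℝ)) :=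
    Filter.Tendsto.isBigO_one ℝ
      (((continuous_iff_continuousAt.2 fun x => (exp_analytic (𝕂 := ℝ) (x : A)).continuousAt).comp (continuous_id.smul continuous_const)).tendsto 0)
  have hEY : (fun ε : ℝ => exp (ε • Y)) =O[𝓝 (0:ℝ)] (fun _ => (1:ℝ)) :=
    Filter.Tendsto.isBigO_one ℝ
      (((continuous_iff_continuousAt.2 fun x => (exp_analytic (𝕂 := ℝ) (x : A)).continuousAt).comp (continuous_id.smul continuous_const)).tendsto 0)
  have hRX := exp_taylor_isBigO X
  have hRY := exp_taylor_isBigO Y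
  have hE : (fun ε : ℝ => (ε ^ 3) • ((2:ℝ)⁻¹ • (Y * (X * X) - X * (X * Y) + Y * (Y * X) - X * (Y * Y))
        + (ε * (4:ℝ)⁻¹) • (Y * (Y * (X * X)) - X * (X * (Y * Y))))) =O[𝓝 (0:ℝ)] fun ε => ε ^ 3 := by
    have h1 : (fun ε : ℝ => (ε:ℝ) ^ 3) =O[𝓝 (0:ℝ)] fun ε => ε ^ 3 := isBigO_refl _ _
    have h2 : (fun ε : ℝ => ((2:ℝ)⁻¹ • (Y * (X * X) - X * (X * Y) + Y * (Y * X) - X * (Y * Y))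
        + (ε * (4:ℝ)⁻¹) • (Y * (Y * (X * X)) - X * (X * (Y * Y))))) =O[𝓝 (0:ℝ)] (fun _ => (1:ℝ)) := by
      refine Filter.Tendsto.isBigO_one ℝ (Continuous.tendsto ?_ 0)
      fun_prop
    simpa using h1.smul h2
  have decomp : ∀ ε : ℝ,
      exp (ε • Y) * exp (ε • X) - exp (ε • X) * exp (ε • Y) - (ε ^ 2) • ⁅Y, X⁆
      = exp (ε • Y) * (exp (ε • X) - QX ε) + (exp (ε • Y) - QY ε) * QX ε
        - exp (ε • X) * (exp (ε • Y) - QY ε) - (exp (ε • X) - QX ε) * QY ε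
        + (QY ε * QX ε - QX ε * QY ε - (ε ^ 2) • ⁅Y, X⁆) := by
    intro ε; noncomm_ring
  have hfifth : (fun ε : ℝ => QY ε * QX ε - QX ε * QY ε - (ε ^ 2) • ⁅Y, X⁆)
      =O[𝓝 (0:ℝ)] fun ε => ε ^ 3 := by
    refine IsBigO.congr' hE ?_ (EventuallyEq.refl _ _)
    filter_upwards with ε
    exact (poly_comm_id X Y ε).symm
  have t1 := hEY.mul hRX
  have t2 := hRY.mul hQXO
  have t3 := hEX.mul hRY
  have t4 := hRX.mul hQYO
  simp only [one_mul, mul_one] at t1 t2 t3 t4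
  have tot := (((t1.add t2).sub t3).sub t4).add hfifth
  refine tot.congr' ?_ (EventuallyEq.refl _ _)
  filter_upwards with ε
  exact (decomp ε).symm

end aux

/-- The normalized order-asymmetry converges to the norm of the commutator
as ε → 0 (ε ≠ 0): the quadratic-scaling prediction of Sections 9 and 11. -/
theorem order_asymmetry_quadratic_scaling (A : Type*) [NormedRing A]
    [NormedAlgebra ℝ A] [CompleteSpace A] (X Y : A) :
    Tendsto
      (fun ε : ℝ =>
        (1 / ε ^ 2) * ‖exp (ε • Y) * exp (ε • X) - exp (ε • X) * exp (ε • Y)‖)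
      (𝓝[≠] (0 : ℝ)) (𝓝 ‖⁅Y, X⁆‖) := by
  set g : ℝ → A := fun ε => exp (ε • Y) * exp (ε • X) - exp (ε • X) * exp (ε • Y)
      - (ε ^ 2) • ⁅Y, X⁆ with hg
  obtain ⟨C, hC⟩ := isBigO_iff.mp (core_isBigO X Y)
  have h0 : Tendsto (fun ε : ℝ => (ε ^ 2)⁻¹ • g ε) (𝓝[≠] 0) (𝓝 0) := by
    apply squeeze_zero_norm' (a := fun ε : ℝ => C * |ε|)
    · filter_upwards [nhdsWithin_le_nhds hC, self_mem_nhdsWithin] with ε h1 (h2 : ε ≠ 0)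
      rw [norm_smul, norm_inv, norm_pow, Real.norm_eq_abs]
      calc (|ε| ^ 2)⁻¹ * ‖g ε‖ ≤ (|ε| ^ 2)⁻¹ * (C * ‖ε ^ 3‖) := by
            gcongr
        _ = C * |ε| := by
            rw [norm_pow, Real.norm_eq_abs]
            have hne : |ε| ≠ 0 := abs_ne_zero.mpr h2
            field_simp
    · have : Tendsto (fun ε : ℝ => C * |ε|) (𝓝 0) (𝓝 (C * |0|)) :=
        (continuous_const.mul continuous_abs).tendsto 0
      simpa using this.mono_left nhdsWithin_le_nhds
  have h1 : Tendsto (fun ε : ℝ => (ε ^ 2)⁻¹ • (exp (ε • Y) * exp (ε • X)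
      - exp (ε • X) * exp (ε • Y))) (𝓝[≠] 0) (𝓝 ⁅Y, X⁆) := by
    have := h0.const_add (⁅Y, X⁆ : A)
    rw [add_zero] at this
    refine this.congr' ?_
    filter_upwards [self_mem_nhdsWithin] with ε (hε : ε ≠ 0)
    have hε2 : (ε ^ 2 : ℝ) ≠ 0 := pow_ne_zero _ hε
    rw [hg]
    simp only [smul_sub]
    rw [smul_smul, inv_mul_cancel₀ hε2, one_smul]
    abel
  have h2 := h1.norm
  refine h2.congr' ?_
  filter_upwards [self_mem_nhdsWithin] with ε (hε : ε ≠ 0)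
  rw [norm_smul, norm_inv, norm_pow, Real.norm_eq_abs, sq_abs, one_div]
end
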